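/- Let $f(z) = z(\lambda + \sum_{n\ge1} a_n z^n)$ be a formal power series over a field $\mathcal{K}$ with $\lambda$ not a root of unity. Then there exists a unique formal power series $h(z) = z\sum_{n\ge0} b_n z^n \in \mathcal{K}[[z]]$ with $b_0 = 1$ such that $h \circ f = \lambda \cdot h$ (as formal power series). -/

import Mathlib

noncomputable def bAux {K : Type*} [Field K] (lam : K) (c : ℕ → ℕ → K) : ℕ → K
  | 0 => 1
  | n + 1 =>
      (∑ ℓ ∈ (Finset.range (n + 1)).attach, bAux lam c ℓ * c (n + 1) ℓ) /
        (lam - lam ^ (n + 2))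
  decreasing_by exact Finset.mem_range.mp ℓ.2

theorem stmt17 {K : Type*} [Field K] (lam : K) (hlam0 : lam ≠ 0)
    (hroot : ∀ n : ℕ, 1 ≤ n → lam ^ n ≠ 1) (a : ℕ → K) :
    ∃! b : ℕ → K, b 0 = 1 ∧ ∀ n : ℕ,
      ∑ ℓ ∈ Finset.range (n + 1),
        b ℓ * (PowerSeries.coeff (R := K) (n + 1))
          ((PowerSeries.mk (fun m => if m = 0 then 0 else if m = 1 then lam else a (m - 1))) ^ (ℓ + 1))
      = lam * b n := by
  set F : PowerSeries K :=
    PowerSeries.mk (fun m => if m = 0 then 0 else if m = 1 then lam else a (m - 1)) with hF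
  set c : ℕ → ℕ → K := fun n ℓ => (PowerSeries.coeff (R := K) (n + 1)) (F ^ (ℓ + 1)) with hc
  set g : PowerSeries K := PowerSeries.mk (fun m => if m = 0 then lam else a m) with hg
  have hFXg : F = PowerSeries.X * g := by
    ext k
    cases k with
    | zero => simp [hF, hg]
    | succ k =>
      rw [PowerSeries.coeff_succ_X_mul]
      cases k with
      | zero => simp [hF, hg]
      | succ k => simp [hF, hg]
  have hdiag : ∀ n : ℕ, c n n = lam ^ (n + 1) := by
    intro n
    have h1 := PowerSeries.coeff_X_pow_mul (g ^ (n + 1)) (n + 1) 0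
    rw [zero_add] at h1
    have : (PowerSeries.coeff (R := K) (n + 1)) (F ^ (n + 1)) = lam ^ (n + 1) := by
      rw [hFXg, mul_pow, h1]
      have h2 : (PowerSeries.coeff (R := K) 0) (g ^ (n + 1)) =
          (PowerSeries.constantCoeff (R := K)) (g ^ (n + 1)) := by
        simp [PowerSeries.coeff_zero_eq_constantCoeff]
      rw [h2, map_pow]
      have h3 : (PowerSeries.constantCoeff (R := K)) g = lam := by simp [hg]
      rw [h3]
    simpa [hc] using this
  have hd : ∀ n : ℕ, lam - lam ^ (n + 2) ≠ 0 := by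
    intro n h
    apply hroot (n + 1) (by omega)
    have h2 : lam ^ (n + 2) = lam := by
      rw [sub_eq_zero] at h; exact h.symm
    have h3 : lam ^ (n + 1) * lam = 1 * lam := by
      rw [← pow_succ, h2, one_mul]
    exact mul_right_cancel₀ hlam0 h3
  set b0 : ℕ → K := bAux lam c with hb0
  have hb00 : b0 0 = 1 := by rw [hb0, bAux]
  have hb0succ : ∀ n : ℕ, b0 (n + 1) =
      (∑ ℓ ∈ Finset.range (n + 1), b0 ℓ * c (n + 1) ℓ) / (lam - lam ^ (n + 2)) := by
    intro n
    rw [hb0, bAux]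
    rw [Finset.sum_attach (Finset.range (n + 1)) (fun ℓ => bAux lam c ℓ * c (n + 1) ℓ)]
  have key : ∀ b : ℕ → K, (b 0 = 1 ∧ ∀ n : ℕ,
      ∑ ℓ ∈ Finset.range (n + 1), b ℓ * c n ℓ = lam * b n) ↔ b = b0 := by
    intro b
    constructor
    · rintro ⟨h1, h2⟩
      funext n
      induction n using Nat.strong_induction_on with
      | _ n ih =>
        match n with
        | 0 => rw [h1, hb00]
        | n + 1 =>
          have heq := h2 (n + 1)
          rw [Finset.sum_range_succ] at heq
          have hsum : ∑ ℓ ∈ Finset.range (n + 1), b ℓ * c (n + 1) ℓ =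
              ∑ ℓ ∈ Finset.range (n + 1), b0 ℓ * c (n + 1) ℓ := by
            apply Finset.sum_congr rfl
            intro ℓ hℓ
            rw [ih ℓ (Finset.mem_range.mp hℓ)]
          rw [hsum, hdiag (n + 1)] at heq
          rw [hb0succ n, eq_div_iff (hd n)]
          linear_combination -heq
    · rintro rfl
      refine ⟨hb00, fun n => ?_⟩
      match n with
      | 0 =>
        rw [Finset.sum_range_one, hdiag 0, hb00]; ring
      | n + 1 =>
        rw [Finset.sum_range_succ, hdiag (n + 1)]
        have e : b0 (n + 1) * (lam - lam ^ (n + 2)) =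
            ∑ ℓ ∈ Finset.range (n + 1), b0 ℓ * c (n + 1) ℓ := by
          rw [hb0succ n, div_mul_cancel₀ _ (hd n)]
        linear_combination -e
  exact ⟨b0, (key b0).mpr rfl, fun b hb => (key b).mp hb⟩
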